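/- If a C^1 vector field j = (j^0, J) on ℝ × ℝ^d satisfies that j^0 > 0 whenever j ≠ 0, then along any integral curve γ of j (i.e. γ'(s) = j(γ(s))) starting at a point where j ≠ 0, the time component γ^0 is strictly monotonically increasing on the maximal interval of existence. -/

import Mathlib

open Set

/-- If the vector field vanishes at a point on the curve, the curve is locally constant there. -/
lemma loc_const {d : ℕ} (j : ℝ × EuclideanSpace ℝ (Fin d) → ℝ × EuclideanSpace ℝ (Fin d))
    (hj : ContDiff ℝ 1 j)
    (a b : ℝ)
    (γ : ℝ → ℝ × EuclideanSpace ℝ (Fin d))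
    (hγ : ∀ s ∈ Ioo a b, HasDerivAt γ (j (γ s)) s)
    (s₂ : ℝ) (hs₂ : s₂ ∈ Ioo a b) (hz : j (γ s₂) = 0) :
    ∀ᶠ t in nhds s₂, γ t = γ s₂ := by
  obtain ⟨K, t, ht, hK⟩ := (hj.contDiffAt :
      ContDiffAt ℝ 1 j (γ s₂)).exists_lipschitzOnWith
  have hcont : ContinuousAt γ s₂ := (hγ s₂ hs₂).continuousAt
  have h1 : ∀ᶠ u in nhds s₂, HasDerivAt γ (j (γ u)) u ∧ γ u ∈ t := by
    filter_upwards [isOpen_Ioo.eventually_mem hs₂, hcont.eventually_mem ht] with u hu hu'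
    exact ⟨hγ u hu, hu'⟩
  have h2 : ∀ᶠ u in nhds s₂,
      HasDerivAt (fun _ => γ s₂) (j ((fun _ => γ s₂) u)) u ∧ (fun _ => γ s₂) u ∈ t := by
    refine Filter.Eventually.of_forall fun u => ⟨?_, mem_of_mem_nhds ht⟩
    simpa [hz] using hasDerivAt_const u (γ s₂)
  exact ODE_solution_unique_of_eventually (Filter.Eventually.of_forall fun _ => hK) h1 h2 rfl

/-- If a C¹ vector field `j = (j⁰, J)` on `ℝ × ℝ^d` satisfies `j⁰ > 0` wherever `j ≠ 0`,
then along any integral curve of `j` starting at a non-node, the time component is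
strictly increasing on the (maximal) interval of existence. -/
theorem stmt0 {d : ℕ} (j : ℝ × EuclideanSpace ℝ (Fin d) → ℝ × EuclideanSpace ℝ (Fin d))
    (hj : ContDiff ℝ 1 j)
    (hpos : ∀ p, j p ≠ 0 → 0 < (j p).1)
    (a b : ℝ) (hab : a < 0) (hb : 0 < b)
    (γ : ℝ → ℝ × EuclideanSpace ℝ (Fin d))
    (hγ : ∀ s ∈ Ioo a b, HasDerivAt γ (j (γ s)) s)
    (q : EuclideanSpace ℝ (Fin d))
    (hγ0 : γ 0 = (0, q))
    (hnode : j (0, q) ≠ 0) :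
    StrictMonoOn (fun s => (γ s).1) (Ioo a b) := by
  have h0mem : (0 : ℝ) ∈ Ioo a b := ⟨hab, hb⟩
  -- derivative of the first component
  have hderiv : ∀ s ∈ Ioo a b, HasDerivAt (fun s => (γ s).1) (j (γ s)).1 s := by
    intro s hs
    exact (ContinuousLinearMap.fst ℝ ℝ (EuclideanSpace ℝ (Fin d))).hasFDerivAt.comp_hasDerivAt
      s (hγ s hs)
  -- the vector field never vanishes along γ on Ioo a b
  have hne : ∀ s ∈ Ioo a b, j (γ s) ≠ 0 := by
    intro s₂ hs₂ hz
    -- connectedness argument: γ is constant wherever it hits a zero of j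
    set c := γ s₂ with hc
    set U : Set ℝ := {u | ∀ᶠ v in nhds u, γ v = c} with hU
    set V : Set ℝ := Ioo a b ∩ γ ⁻¹' {c}ᶜ with hV
    have hUopen : IsOpen U := by
      rw [isOpen_iff_mem_nhds]
      intro u hu
      exact hu.eventually_nhds
    have hVopen : IsOpen V := by
      rw [isOpen_iff_mem_nhds]
      intro u hu
      have hcont : ContinuousAt γ u := (hγ u hu.1).continuousAt
      filter_upwards [isOpen_Ioo.eventually_mem hu.1,
        hcont.eventually_mem (IsOpen.mem_nhds (isOpen_compl_singleton) hu.2)] with v hv hv'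
      exact ⟨hv, hv'⟩
    have hcover : Ioo a b ⊆ U ∪ V := by
      intro u hu
      by_cases h : γ u = c
      · left
        have := loc_const j hj a b γ hγ u hu (h ▸ hz)
        filter_upwards [this] with v hv
        rw [hv, h]
      · exact Or.inr ⟨hu, h⟩
    have hUne : (Ioo a b ∩ U).Nonempty := by
      refine ⟨s₂, hs₂, ?_⟩
      exact loc_const j hj a b γ hγ s₂ hs₂ hz
    have hVne : (Ioo a b ∩ V).Nonempty := by
      refine ⟨0, h0mem, h0mem, ?_⟩
      intro h
      apply hnode
      rw [← hγ0, show γ 0 = c from h, hc, hz]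
    obtain ⟨u, hu, huU, huV⟩ := isPreconnected_Ioo U V hUopen hVopen hcover hUne hVne
    exact huV.2 huU.self_of_nhds
  -- first: monotone
  have hmono : MonotoneOn (fun s => (γ s).1) (Ioo a b) := by
    apply monotoneOn_of_deriv_nonneg (convex_Ioo a b)
    · exact fun s hs => ((hderiv s hs).continuousAt).continuousWithinAt
    · rw [interior_Ioo]
      exact fun s hs => ((hderiv s hs).differentiableAt).differentiableWithinAt
    · rw [interior_Ioo]
      intro s hs
      rw [(hderiv s hs).deriv]
      exact (hpos _ (hne s hs)).le
  -- strict
  intro x hx y hy hxy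
  rcases lt_or_eq_of_le (hmono hx hy hxy.le) with h | h
  · exact h
  · exfalso
    -- the first component is constant on [x,y]; pick the midpoint
    set m := (x + y) / 2 with hm
    have hmx : x < m := by rw [hm]; linarith
    have hmy : m < y := by rw [hm]; linarith
    have hmmem : m ∈ Ioo a b := ⟨hx.1.trans hmx, hmy.trans hy.2⟩
    -- near m, (γ ·).1 is constant, so its derivative vanishes
    have hconst : ∀ᶠ v in nhds m, (γ v).1 = (γ x).1 := by
      filter_upwards [Ioo_mem_nhds hmx hmy] with v hv
      have h1 := hmono hx ⟨hx.1.trans hv.1, hv.2.trans hy.2⟩ hv.1.le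
      have h2 := hmono ⟨hx.1.trans hv.1, hv.2.trans hy.2⟩ hy hv.2.le
      rw [← h] at h2
      exact le_antisymm h2 h1
    have hd0 : HasDerivAt (fun s => (γ s).1) 0 m := by
      have : HasDerivAt (fun _ : ℝ => (γ x).1) 0 m := hasDerivAt_const m _
      exact this.congr_of_eventuallyEq hconst
    exact (hpos _ (hne m hmmem)).ne' (hd0.unique (hderiv m hmmem)).symm
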